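/- Let (V,f) be a symplectic space over a field F of characteristic ≠ 2. In the Lie algebra 𝔰_f, the extremal element v ⊗ f_v (for v ≠ 0) is pure (i.e., [v⊗f_v,[v⊗f_v,y]] ≠ 0 for some y) if and only if v does not lie in the radical of f. -/

import Mathlib

/-- The "pure tensor" `v ⊗ f_v`, viewed as the endomorphism `u ↦ f(v,u) • v` of `V`. -/
noncomputable def rk1 {F V : Type*} [Field F] [AddCommGroup V] [Module F V]
    (f : V →ₗ[F] V →ₗ[F] F) (v : V) : Module.End F V :=
  (f v).smulRight v

/-- In `𝔰_f`, the extremal element `v ⊗ f_v` (for `v ≠ 0`) is pure, i.e.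
`⁅v⊗f_v, ⁅v⊗f_v, y⁆⁆ ≠ 0` for some `y ∈ 𝔰_f`, if and only if `v` does not lie in the
radical of `f`. -/
theorem stmt4 {F V : Type*} [Field F] [AddCommGroup V] [Module F V]
    (h2 : (2 : F) ≠ 0)
    (f : V →ₗ[F] V →ₗ[F] F) (halt : ∀ v : V, f v v = 0)
    (v : V) (hv : v ≠ 0) :
    (∃ y ∈ Submodule.span F (Set.range (rk1 f)),
        ⁅rk1 f v, ⁅rk1 f v, y⁆⁆ ≠ 0) ↔ ¬(∀ w : V, f v w = 0) := by
  constructor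
  · rintro ⟨y, -, hne⟩ hall
    apply hne
    have hfv : f v = 0 := by ext w; exact hall w
    have : rk1 f v = 0 := by simp [rk1, hfv]
    simp [this, Ring.lie_def]
  · intro h
    push_neg at h
    obtain ⟨w, hw⟩ := h
    -- antisymmetry
    have hanti : f w v = - f v w := by
      have := halt (v + w)
      simp [map_add, halt] at this
      linear_combination this
    refine ⟨rk1 f w, Submodule.subset_span ⟨w, rfl⟩, fun hzero => ?_⟩
    have hc := DFunLike.congr_fun hzero w
    simp only [Ring.lie_def, LinearMap.sub_apply, Module.End.mul_apply, rk1,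
      LinearMap.smulRight_apply, map_smul, smul_eq_mul, smul_smul, halt,
      LinearMap.zero_apply, mul_zero, zero_mul, zero_smul, sub_zero, zero_sub,
      smul_zero, neg_zero, hanti] at hc
    simp only [map_zero, zero_smul, zero_sub, map_neg, map_smul, smul_eq_mul, hw,
      mul_zero, zero_mul, sub_zero, smul_smul, smul_neg, neg_smul, neg_neg, sub_neg_eq_add,
      ← add_smul] at hc
    rw [← neg_smul, ← sub_smul, smul_eq_zero] at hc
    rcases hc with hc | hc
    · apply hw
      have : (2 : F) * ((f v) w * ((f v) w * (f v) w)) = 0 := by linear_combination hc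
      rcases mul_eq_zero.mp this with h | h
      · exact absurd h h2
      rcases mul_eq_zero.mp h with h | h
      · exact h
      rcases mul_eq_zero.mp h with h | h <;> exact h
    · exact hv hc
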